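/- Let 0 < θ < 1 and let f : (0,∞) → (0,∞) be concave with lim_{v→∞} f(v)/v^θ = L for some L ∈ [0,∞). Then the right derivative f'₊ satisfies lim_{v→∞} v^{1−θ}·f'₊(v) = θ·L. In particular, with θ = (N−1)/N one gets lim_{v→∞} v^{1/N}·f'₊(v) = ((N−1)/N)·L. -/

import Mathlib

open Filter Topology

/-- For a concave function on `(0,∞)`, the right derivative exists at every `v > 0`
(it equals the sup of the right slopes), and it is sandwiched between right slopes
and left slopes. -/
lemma aux_rightDeriv (f : ℝ → ℝ) (hconc : ConcaveOn ℝ (Set.Ioi 0) f) {v : ℝ} (hv : 0 < v) :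
    (∀ y, v < y → slope f v y ≤ derivWithin f (Set.Ioi v) v) ∧
    (∀ w, 0 < w → w < v → derivWithin f (Set.Ioi v) v ≤ slope f w v) := by
  have hmem : v ∈ Set.Ioi (0 : ℝ) := hv
  have hanti : AntitoneOn (slope f v) (Set.Ioi 0 \ {v}) := hconc.slope_anti hmem
  have hsub : Set.Ioi v ⊆ Set.Ioi (0 : ℝ) \ {v} := fun y hy =>
    ⟨lt_trans hv hy, ne_of_gt hy⟩
  have hanti' : AntitoneOn (slope f v) (Set.Ioi v) := hanti.mono hsub
  have hhalf : v / 2 ∈ Set.Ioi (0 : ℝ) \ {v} :=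
    ⟨half_pos hv, ne_of_lt (half_lt_self hv)⟩
  have hbdd : BddAbove (slope f v '' Set.Ioi v) := by
    refine ⟨slope f v (v / 2), ?_⟩
    rintro _ ⟨y, hy, rfl⟩
    exact hanti hhalf (hsub hy) (le_of_lt ((half_lt_self hv).trans hy))
  set D := sSup (slope f v '' Set.Ioi v) with hD
  have htend : Tendsto (slope f v) (𝓝[>] v) (𝓝 D) :=
    hanti'.tendsto_nhdsGT hbdd
  have hder : HasDerivWithinAt f D (Set.Ioi v) v := by
    rw [hasDerivWithinAt_iff_tendsto_slope]
    rwa [Set.diff_singleton_eq_self (by simp)]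
  have hdw : derivWithin f (Set.Ioi v) v = D :=
    hder.derivWithin (uniqueDiffWithinAt_Ioi v)
  constructor
  · intro y hy
    rw [hdw]
    exact le_csSup hbdd ⟨y, hy, rfl⟩
  · intro w hw hwv
    rw [hdw]
    refine csSup_le ⟨slope f v (v + 1), ⟨v + 1, by simp, rfl⟩⟩ ?_
    rintro _ ⟨y, hy, rfl⟩
    calc slope f v y ≤ slope f v w :=
          hanti ⟨hw, ne_of_lt hwv⟩ (hsub hy) (le_of_lt (hwv.trans hy))
      _ = slope f w v := slope_comm f v w

/-- Asymptotics of the right derivative of a positive concave function with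
power-like growth `f(v) ~ L v^θ`. -/
theorem stmt9 (θ L : ℝ) (hθ0 : 0 < θ) (hθ1 : θ < 1) (hL : 0 ≤ L)
    (f : ℝ → ℝ)
    (hpos : ∀ v ∈ Set.Ioi (0 : ℝ), 0 < f v)
    (hconc : ConcaveOn ℝ (Set.Ioi 0) f)
    (hlim : Tendsto (fun v : ℝ => f v / v ^ θ) atTop (nhds L)) :
    Tendsto (fun v : ℝ => v ^ (1 - θ) * derivWithin f (Set.Ioi v) v) atTop
      (nhds (θ * L)) := by
  have key : ∀ ε > (0 : ℝ),
      ∀ᶠ v in atTop, |v ^ (1 - θ) * derivWithin f (Set.Ioi v) v - θ * L| < ε := by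
    intro ε hε
    -- Step A: choose a small δ so that the secant approximations of θ·L are within ε/2.
    set g : ℝ → ℝ := fun x => x ^ θ with hg
    have hpow : HasDerivAt g θ 1 := by
      have h := Real.hasDerivAt_rpow_const (x := (1 : ℝ)) (p := θ) (Or.inl one_ne_zero)
      simpa [hg] using h
    have hslope : Tendsto (slope g 1) (𝓝[≠] 1) (𝓝 θ) :=
      hasDerivAt_iff_tendsto_slope.1 hpow
    have hmap1 : Tendsto (fun d : ℝ => 1 + d) (𝓝[>] 0) (𝓝[≠] 1) := by
      apply tendsto_nhdsWithin_of_tendsto_nhds_of_eventually_within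
      · have : Tendsto (fun d : ℝ => 1 + d) (𝓝 0) (𝓝 1) := by
          simpa using (show Continuous (fun d : ℝ => 1 + d) by fun_prop).tendsto (0 : ℝ)
        exact this.mono_left nhdsWithin_le_nhds
      · filter_upwards [self_mem_nhdsWithin] with d hd
        have : (0 : ℝ) < d := hd
        simp only [Set.mem_compl_iff, Set.mem_singleton_iff]
        intro h; nlinarith
    have hmap2 : Tendsto (fun d : ℝ => 1 - d) (𝓝[>] 0) (𝓝[≠] 1) := by
      apply tendsto_nhdsWithin_of_tendsto_nhds_of_eventually_within
      · have : Tendsto (fun d : ℝ => 1 - d) (𝓝 0) (𝓝 1) := by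
          simpa using (show Continuous (fun d : ℝ => 1 - d) by fun_prop).tendsto (0 : ℝ)
        exact this.mono_left nhdsWithin_le_nhds
      · filter_upwards [self_mem_nhdsWithin] with d hd
        have : (0 : ℝ) < d := hd
        simp only [Set.mem_compl_iff, Set.mem_singleton_iff]
        intro h; nlinarith
    have hA : Tendsto (fun d : ℝ => L * slope g 1 (1 + d)) (𝓝[>] 0) (𝓝 (L * θ)) :=
      (hslope.comp hmap1).const_mul L
    have hB : Tendsto (fun d : ℝ => L * slope g 1 (1 - d)) (𝓝[>] 0) (𝓝 (L * θ)) :=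
      (hslope.comp hmap2).const_mul L
    have hεA : θ * L - ε / 2 < L * θ := by nlinarith
    have hεB : L * θ < θ * L + ε / 2 := by nlinarith
    have hev : ∀ᶠ d in 𝓝[>] (0 : ℝ),
        (θ * L - ε / 2 < L * slope g 1 (1 + d) ∧ L * slope g 1 (1 - d) < θ * L + ε / 2)
        ∧ d ∈ Set.Ioo (0 : ℝ) 1 := by
      refine (((hA.eventually_const_lt hεA).and (hB.eventually_lt_const hεB)).and ?_)
      exact Ioo_mem_nhdsGT_of_mem ⟨le_refl _, zero_lt_one⟩
    obtain ⟨δ, ⟨⟨h1, h2⟩, hδ0, hδ1⟩⟩ := hev.exists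
    -- rewrite the slopes explicitly
    have hδne : δ ≠ 0 := ne_of_gt hδ0
    have e1 : slope g 1 (1 + δ) = ((1 + δ) ^ θ - 1) / δ := by
      rw [slope_def_field]
      have h1' : (1 : ℝ) + δ - 1 = δ := by ring
      rw [h1', hg]
      simp [Real.one_rpow]
    have e2 : slope g 1 (1 - δ) = (1 - (1 - δ) ^ θ) / δ := by
      rw [slope_def_field]
      have h1' : (1 : ℝ) - δ - 1 = -δ := by ring
      rw [h1', hg]
      simp only [Real.one_rpow]
      rw [div_neg, ← neg_div, neg_sub]
    rw [e1] at h1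
    rw [e2] at h2
    -- Step B: asymptotics of the two secant expressions as v → ∞.
    have h1δpos : (0 : ℝ) < 1 + δ := by linarith
    have h1δpos' : (0 : ℝ) < 1 - δ := by linarith
    have hcomp1 : Tendsto (fun v : ℝ => f ((1 + δ) * v) / ((1 + δ) * v) ^ θ) atTop (𝓝 L) :=
      hlim.comp (Tendsto.const_mul_atTop h1δpos tendsto_id)
    have hcomp2 : Tendsto (fun v : ℝ => f ((1 - δ) * v) / ((1 - δ) * v) ^ θ) atTop (𝓝 L) :=
      hlim.comp (Tendsto.const_mul_atTop h1δpos' tendsto_id)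
    have T1 : Tendsto
        (fun v : ℝ => ((1 + δ) ^ θ * (f ((1 + δ) * v) / ((1 + δ) * v) ^ θ) - f v / v ^ θ) / δ)
        atTop (𝓝 (L * (((1 + δ) ^ θ - 1) / δ))) := by
      have := ((hcomp1.const_mul ((1 + δ) ^ θ)).sub hlim).div_const δ
      have hc : ((1 + δ) ^ θ * L - L) / δ = L * (((1 + δ) ^ θ - 1) / δ) := by ring
      rwa [hc] at this
    have T2 : Tendsto
        (fun v : ℝ => (f v / v ^ θ - (1 - δ) ^ θ * (f ((1 - δ) * v) / ((1 - δ) * v) ^ θ)) / δ)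
        atTop (𝓝 (L * ((1 - (1 - δ) ^ θ) / δ))) := by
      have := (hlim.sub (hcomp2.const_mul ((1 - δ) ^ θ))).div_const δ
      have hc : (L - (1 - δ) ^ θ * L) / δ = L * ((1 - (1 - δ) ^ θ) / δ) := by ring
      rwa [hc] at this
    filter_upwards [T1.eventually_const_lt h1, T2.eventually_lt_const h2,
      eventually_ge_atTop (1 : ℝ)] with v hv1 hv2 hv1'
    have hv : (0 : ℝ) < v := lt_of_lt_of_le zero_lt_one hv1'
    have hvθ : (0 : ℝ) < v ^ θ := Real.rpow_pos_of_pos hv θ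
    have h1δθ : (0 : ℝ) < (1 + δ) ^ θ := Real.rpow_pos_of_pos h1δpos θ
    have h2δθ : (0 : ℝ) < (1 - δ) ^ θ := Real.rpow_pos_of_pos h1δpos' θ
    have hv1θ : v ^ (1 - θ) = v / v ^ θ := by
      rw [Real.rpow_sub hv, Real.rpow_one]
    -- algebraic identities for the two scaled slopes
    have key1 : v ^ (1 - θ) * slope f v ((1 + δ) * v)
        = ((1 + δ) ^ θ * (f ((1 + δ) * v) / ((1 + δ) * v) ^ θ) - f v / v ^ θ) / δ := by
      rw [slope_def_field, hv1θ]
      rw [Real.mul_rpow h1δpos.le hv.le]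
      have hden : (1 + δ) * v - v = δ * v := by ring
      rw [hden]
      field_simp
    have key2 : v ^ (1 - θ) * slope f ((1 - δ) * v) v
        = (f v / v ^ θ - (1 - δ) ^ θ * (f ((1 - δ) * v) / ((1 - δ) * v) ^ θ)) / δ := by
      rw [slope_def_field, hv1θ]
      rw [Real.mul_rpow h1δpos'.le hv.le]
      have hden : v - (1 - δ) * v = δ * v := by ring
      rw [hden]
      field_simp
    obtain ⟨hlow, hhigh⟩ := aux_rightDeriv f hconc hv
    have hvpow : (0 : ℝ) ≤ v ^ (1 - θ) := (Real.rpow_pos_of_pos hv _).le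
    have hlb : v ^ (1 - θ) * slope f v ((1 + δ) * v)
        ≤ v ^ (1 - θ) * derivWithin f (Set.Ioi v) v := by
      apply mul_le_mul_of_nonneg_left _ hvpow
      exact hlow ((1 + δ) * v) (by nlinarith)
    have hub : v ^ (1 - θ) * derivWithin f (Set.Ioi v) v
        ≤ v ^ (1 - θ) * slope f ((1 - δ) * v) v := by
      apply mul_le_mul_of_nonneg_left _ hvpow
      exact hhigh ((1 - δ) * v) (by nlinarith) (by nlinarith)
    rw [key1] at hlb
    rw [key2] at hub
    rw [abs_lt]
    constructor <;> linarith
  rw [Metric.tendsto_nhds]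
  intro ε hε
  simpa [Real.dist_eq] using key ε hε
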